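/- Let (u^k_n, v^k_n) be a solution of the QLB scheme. For any integers n₁ ∈ ℤ and 0 ≤ k₀, with k₀ + 1 ≤ k ≤ k₁, the following hold: (i) ∑_{j=k₁−k}^{k₁−k₀} |v^{k₁+1−j}_{n₁−1−j}|² + ∑_{j=k₁−k}^{k₁−k₀} |u^{k₁+1−j}_{n₁+1+j}|² ≤ ∑_{l=n₁−k₁+k₀}^{n₁+k₁−k₀}(|u^{k₀}_l|² + |v^{k₀}_l|²); (ii) ∑_{l=n₁−k₁+k+1}^{n₁+k₁−k+1}|u^{k+1}_l|² + ∑_{l=n₁−k₁+k−1}^{n₁+k₁−k−1}|v^{k+1}_l|² ≤ ∑_{l=n₁−k₁+k₀}^{n₁+k₁−k₀}(|u^{k₀}_l|² + |v^{k₀}_l|²); (iii) if n ↦ |u^0_n|² + |v^0_n|² is summable, then ∑_{j=0}^{k₁} |v^{k₁+1−j}_{n₁−1−j}|² + ∑_{j=0}^{k₁} |u^{k₁+1−j}_{n₁+1+j}|² ≤ ∑_{l∈ℤ}(|u^0_l|² + |v^0_l|²). -/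

import Mathlib

open Complex

noncomputable section

/-- `G(u,v) = conj(u)·v + u·conj(v)`. -/
def Gc (u v : ℂ) : ℂ := (starRingEnd ℂ) u * v + u * (starRingEnd ℂ) v

/-- One step of the quantum lattice Boltzmann (QLB) scheme:
`a, b` are the values `u^k_n, v^k_n` and `a', b'` the values `u^{k+1}_{n+1}, v^{k+1}_{n-1}`. -/
def QLBStep (h m α β : ℝ) (a b a' b' : ℂ) : Prop :=
  a' - a = (Complex.I * (m : ℂ) * (h : ℂ) / 2) * (b' + b)
      + (Complex.I * (α : ℂ) * (h : ℂ) / 2) * (a' + a) * ((‖b‖ ^ 2 : ℝ) : ℂ)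
      + (Complex.I * (β : ℂ) * (h : ℂ) / 2) * (b' + b) * Gc a b
  ∧ b' - b = (Complex.I * (m : ℂ) * (h : ℂ) / 2) * (a' + a)
      + (Complex.I * (α : ℂ) * (h : ℂ) / 2) * (b' + b) * ((‖a‖ ^ 2 : ℝ) : ℂ)
      + (Complex.I * (β : ℂ) * (h : ℂ) / 2) * (a' + a) * Gc a b

/-- `(u, v)` is a solution of the QLB scheme. -/
def IsQLB (h m α β : ℝ) (u v : ℕ → ℤ → ℂ) : Prop :=
  ∀ (k : ℕ) (n : ℤ), QLBStep h m α β (u k n) (v k n) (u (k + 1) (n + 1)) (v (k + 1) (n - 1))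

lemma qlb_conserve {h m α β : ℝ} {a b a' b' : ℂ} (hs : QLBStep h m α β a b a' b') :
    ‖a'‖ ^ 2 + ‖b'‖ ^ 2 = ‖a‖ ^ 2 + ‖b‖ ^ 2 := by
  obtain ⟨h1, h2⟩ := hs
  simp only [Gc] at h1 h2
  have h1' := congrArg (starRingEnd ℂ) h1
  have h2' := congrArg (starRingEnd ℂ) h2
  simp only [map_add, map_sub, map_mul, map_div₀, map_ofNat, Complex.conj_I,
    Complex.conj_ofReal, Complex.conj_conj] at h1' h2'
  have key : a' * (starRingEnd ℂ) a' + b' * (starRingEnd ℂ) b'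
      = a * (starRingEnd ℂ) a + b * (starRingEnd ℂ) b := by
    linear_combination ((starRingEnd ℂ) a' + (starRingEnd ℂ) a) * h1 / 2
      + ((starRingEnd ℂ) b' + (starRingEnd ℂ) b) * h2 / 2
      + (a' + a) * h1' / 2 + (b' + b) * h2' / 2
  rw [Complex.mul_conj, Complex.mul_conj, Complex.mul_conj, Complex.mul_conj,
    ← Complex.ofReal_add, ← Complex.ofReal_add, Complex.ofReal_inj] at key
  simpa [Complex.sq_norm] using key

lemma sum_Icc_shift (f : ℤ → ℝ) (a b c : ℤ) :
    ∑ l ∈ Finset.Icc a b, f (l + c) = ∑ l ∈ Finset.Icc (a + c) (b + c), f l := by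
  rw [← Finset.map_add_right_Icc, Finset.sum_map]
  rfl

lemma reindex_refl (k₀ k k₁ : ℕ) (hk0 : k₀ ≤ k) (hk : k ≤ k₁) (g : ℕ → ℝ) :
    ∑ j ∈ Finset.Icc (k₁ - k) (k₁ - k₀), g j = ∑ κ ∈ Finset.Icc k₀ k, g (k₁ - κ) := by
  refine (Finset.sum_nbij' (fun κ => k₁ - κ) (fun j => k₁ - j) ?_ ?_ ?_ ?_ ?_).symm
  all_goals intros; simp only [Finset.mem_Icc] at *; try omega

/-- Total squared mass over the triangle slice at level `k`. -/
def Tsum (u v : ℕ → ℤ → ℂ) (n₁ : ℤ) (k₁ k : ℕ) : ℝ :=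
  ∑ l ∈ Finset.Icc (n₁ - (k₁ : ℤ) + (k : ℤ)) (n₁ + (k₁ : ℤ) - (k : ℤ)),
    (‖u k l‖ ^ 2 + ‖v k l‖ ^ 2)

lemma Tsum_nonneg (u v : ℕ → ℤ → ℂ) (n₁ : ℤ) (k₁ k : ℕ) : 0 ≤ Tsum u v n₁ k₁ k :=
  Finset.sum_nonneg fun _ _ => by positivity

lemma qlb_key {h m α β : ℝ} {u v : ℕ → ℤ → ℂ} (huv : IsQLB h m α β u v)
    (n₁ : ℤ) (k₁ k : ℕ) :
    Tsum u v n₁ k₁ k =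
      (∑ l ∈ Finset.Icc (n₁ - (k₁ : ℤ) + (k : ℤ) + 1) (n₁ + (k₁ : ℤ) - (k : ℤ) + 1),
        ‖u (k + 1) l‖ ^ 2)
      + (∑ l ∈ Finset.Icc (n₁ - (k₁ : ℤ) + (k : ℤ) - 1) (n₁ + (k₁ : ℤ) - (k : ℤ) - 1),
        ‖v (k + 1) l‖ ^ 2) := by
  have h1 : Tsum u v n₁ k₁ k = ∑ l ∈ Finset.Icc (n₁ - (k₁ : ℤ) + (k : ℤ)) (n₁ + (k₁ : ℤ) - (k : ℤ)),
      (‖u (k + 1) (l + 1)‖ ^ 2 + ‖v (k + 1) (l - 1)‖ ^ 2) :=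
    Finset.sum_congr rfl fun l _ => (qlb_conserve (huv k l)).symm
  rw [h1, Finset.sum_add_distrib]
  congr 1
  · exact sum_Icc_shift (fun l => ‖u (k + 1) l‖ ^ 2) _ _ 1
  · have := sum_Icc_shift (fun l => ‖v (k + 1) l‖ ^ 2)
      (n₁ - (k₁ : ℤ) + (k : ℤ)) (n₁ + (k₁ : ℤ) - (k : ℤ)) (-1)
    simpa [sub_eq_add_neg] using this

lemma qlb_step_le {h m α β : ℝ} {u v : ℕ → ℤ → ℂ} (huv : IsQLB h m α β u v)
    (n₁ : ℤ) {k₁ k : ℕ} (hk : k ≤ k₁) :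
    Tsum u v n₁ k₁ (k + 1)
      + (‖v (k + 1) (n₁ - (k₁ : ℤ) + (k : ℤ) - 1)‖ ^ 2
        + ‖u (k + 1) (n₁ + (k₁ : ℤ) - (k : ℤ) + 1)‖ ^ 2)
      ≤ Tsum u v n₁ k₁ k := by
  rw [qlb_key huv n₁ k₁ k]
  set L : ℤ := n₁ - (k₁ : ℤ) + (k : ℤ) with hL
  set R : ℤ := n₁ + (k₁ : ℤ) - (k : ℤ) with hR
  have hLR : L ≤ R := by simp only [hL, hR]; omega
  have e1 : (n₁ - (k₁ : ℤ) + ((k + 1 : ℕ) : ℤ)) = L + 1 := by push_cast [hL]; ring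
  have e2 : (n₁ + (k₁ : ℤ) - ((k + 1 : ℕ) : ℤ)) = R - 1 := by push_cast [hR]; ring
  have hT : Tsum u v n₁ k₁ (k + 1)
      = (∑ l ∈ Finset.Icc (L + 1) (R - 1), ‖u (k + 1) l‖ ^ 2)
      + (∑ l ∈ Finset.Icc (L + 1) (R - 1), ‖v (k + 1) l‖ ^ 2) := by
    rw [Tsum, e1, e2, Finset.sum_add_distrib]
  rw [hT]
  have hu : (∑ l ∈ Finset.Icc (L + 1) (R - 1), ‖u (k + 1) l‖ ^ 2)
      + ‖u (k + 1) (R + 1)‖ ^ 2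
      ≤ ∑ l ∈ Finset.Icc (L + 1) (R + 1), ‖u (k + 1) l‖ ^ 2 := by
    have hins : (∑ l ∈ insert (R + 1) (Finset.Icc (L + 1) (R - 1)), ‖u (k + 1) l‖ ^ 2)
        = (∑ l ∈ Finset.Icc (L + 1) (R - 1), ‖u (k + 1) l‖ ^ 2)
          + ‖u (k + 1) (R + 1)‖ ^ 2 := by
      rw [Finset.sum_insert (by simp only [Finset.mem_Icc]; omega)]; ring
    rw [← hins]
    refine Finset.sum_le_sum_of_subset_of_nonneg ?_ (fun _ _ _ => by positivity)
    intro x hx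
    simp only [Finset.mem_insert, Finset.mem_Icc] at *
    omega
  have hv : (∑ l ∈ Finset.Icc (L + 1) (R - 1), ‖v (k + 1) l‖ ^ 2)
      + ‖v (k + 1) (L - 1)‖ ^ 2
      ≤ ∑ l ∈ Finset.Icc (L - 1) (R - 1), ‖v (k + 1) l‖ ^ 2 := by
    have hins : (∑ l ∈ insert (L - 1) (Finset.Icc (L + 1) (R - 1)), ‖v (k + 1) l‖ ^ 2)
        = (∑ l ∈ Finset.Icc (L + 1) (R - 1), ‖v (k + 1) l‖ ^ 2)
          + ‖v (k + 1) (L - 1)‖ ^ 2 := by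
      rw [Finset.sum_insert (by simp only [Finset.mem_Icc]; omega)]; ring
    rw [← hins]
    refine Finset.sum_le_sum_of_subset_of_nonneg ?_ (fun _ _ _ => by positivity)
    intro x hx
    simp only [Finset.mem_insert, Finset.mem_Icc] at *
    omega
  linarith

lemma qlb_mono {h m α β : ℝ} {u v : ℕ → ℤ → ℂ} (huv : IsQLB h m α β u v)
    (n₁ : ℤ) {k₁ k₀ k : ℕ} (h0 : k₀ ≤ k) (h1 : k ≤ k₁) :
    Tsum u v n₁ k₁ k ≤ Tsum u v n₁ k₁ k₀ := by
  induction k, h0 using Nat.le_induction with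
  | base => exact le_rfl
  | succ k hk ih =>
    have hs := qlb_step_le huv n₁ (show k ≤ k₁ by omega)
    have h2 := ih (by omega)
    have b1 : (0:ℝ) ≤ ‖v (k + 1) (n₁ - (k₁ : ℤ) + (k : ℤ) - 1)‖ ^ 2 := by positivity
    have b2 : (0:ℝ) ≤ ‖u (k + 1) (n₁ + (k₁ : ℤ) - (k : ℤ) + 1)‖ ^ 2 := by positivity
    linarith

lemma qlb_tel {h m α β : ℝ} {u v : ℕ → ℤ → ℂ} (huv : IsQLB h m α β u v)
    (n₁ : ℤ) {k₁ k₀ k : ℕ} (h0 : k₀ ≤ k) (h1 : k ≤ k₁) :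
    (∑ κ ∈ Finset.Icc k₀ k,
      (‖v (κ + 1) (n₁ - (k₁ : ℤ) + (κ : ℤ) - 1)‖ ^ 2
        + ‖u (κ + 1) (n₁ + (k₁ : ℤ) - (κ : ℤ) + 1)‖ ^ 2))
      + Tsum u v n₁ k₁ (k + 1) ≤ Tsum u v n₁ k₁ k₀ := by
  induction k, h0 using Nat.le_induction with
  | base =>
    rw [Finset.Icc_self, Finset.sum_singleton]
    have := qlb_step_le huv n₁ h1
    linarith
  | succ k hk ih =>
    rw [Finset.sum_Icc_succ_top (by omega : k₀ ≤ k + 1)]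
    have hs := qlb_step_le huv n₁ (show k + 1 ≤ k₁ by omega)
    have h2 := ih (by omega)
    push_cast at hs ⊢
    linarith

/-- Estimates on the solution of the QLB scheme over characteristic triangles. -/
theorem stmt2 (h m α β : ℝ) (hh0 : 0 < h) (hm : 0 ≤ m)
    (u v : ℕ → ℤ → ℂ) (huv : IsQLB h m α β u v)
    (n₁ : ℤ) (k₀ k₁ : ℕ) :
    (∀ k : ℕ, k₀ + 1 ≤ k → k ≤ k₁ →
      (∑ j ∈ Finset.Icc (k₁ - k) (k₁ - k₀),
          ‖v (k₁ + 1 - j) (n₁ - 1 - (j : ℤ))‖ ^ 2)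
        + (∑ j ∈ Finset.Icc (k₁ - k) (k₁ - k₀),
          ‖u (k₁ + 1 - j) (n₁ + 1 + (j : ℤ))‖ ^ 2)
      ≤ ∑ l ∈ Finset.Icc (n₁ - (k₁ : ℤ) + (k₀ : ℤ)) (n₁ + (k₁ : ℤ) - (k₀ : ℤ)),
          (‖u k₀ l‖ ^ 2 + ‖v k₀ l‖ ^ 2)) ∧
    (∀ k : ℕ, k₀ + 1 ≤ k → k ≤ k₁ →
      (∑ l ∈ Finset.Icc (n₁ - (k₁ : ℤ) + (k : ℤ) + 1) (n₁ + (k₁ : ℤ) - (k : ℤ) + 1),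
          ‖u (k + 1) l‖ ^ 2)
        + (∑ l ∈ Finset.Icc (n₁ - (k₁ : ℤ) + (k : ℤ) - 1) (n₁ + (k₁ : ℤ) - (k : ℤ) - 1),
          ‖v (k + 1) l‖ ^ 2)
      ≤ ∑ l ∈ Finset.Icc (n₁ - (k₁ : ℤ) + (k₀ : ℤ)) (n₁ + (k₁ : ℤ) - (k₀ : ℤ)),
          (‖u k₀ l‖ ^ 2 + ‖v k₀ l‖ ^ 2)) ∧
    ((Summable fun n : ℤ => ‖u 0 n‖ ^ 2 + ‖v 0 n‖ ^ 2) →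
      (∑ j ∈ Finset.Icc 0 k₁, ‖v (k₁ + 1 - j) (n₁ - 1 - (j : ℤ))‖ ^ 2)
        + (∑ j ∈ Finset.Icc 0 k₁, ‖u (k₁ + 1 - j) (n₁ + 1 + (j : ℤ))‖ ^ 2)
      ≤ ∑' l : ℤ, (‖u 0 l‖ ^ 2 + ‖v 0 l‖ ^ 2)) := by
  refine ⟨?_, ?_, ?_⟩
  · -- part (i)
    intro k hk0 hk1
    have hk0' : k₀ ≤ k := by omega
    have htel := qlb_tel huv n₁ hk0' hk1
    have hre_v := reindex_refl k₀ k k₁ hk0' hk1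
      (fun j => ‖v (k₁ + 1 - j) (n₁ - 1 - (j : ℤ))‖ ^ 2)
    have hre_u := reindex_refl k₀ k k₁ hk0' hk1
      (fun j => ‖u (k₁ + 1 - j) (n₁ + 1 + (j : ℤ))‖ ^ 2)
    rw [hre_v, hre_u, ← Finset.sum_add_distrib]
    have heq : (∑ κ ∈ Finset.Icc k₀ k,
        (‖v (k₁ + 1 - (k₁ - κ)) (n₁ - 1 - ((k₁ - κ : ℕ) : ℤ))‖ ^ 2
          + ‖u (k₁ + 1 - (k₁ - κ)) (n₁ + 1 + ((k₁ - κ : ℕ) : ℤ))‖ ^ 2))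
        = ∑ κ ∈ Finset.Icc k₀ k,
        (‖v (κ + 1) (n₁ - (k₁ : ℤ) + (κ : ℤ) - 1)‖ ^ 2
          + ‖u (κ + 1) (n₁ + (k₁ : ℤ) - (κ : ℤ) + 1)‖ ^ 2) := by
      refine Finset.sum_congr rfl fun κ hκ => ?_
      simp only [Finset.mem_Icc] at hκ
      have e1 : k₁ + 1 - (k₁ - κ) = κ + 1 := by omega
      have e2 : (n₁ - 1 - ((k₁ - κ : ℕ) : ℤ)) = n₁ - (k₁ : ℤ) + (κ : ℤ) - 1 := by omega
      have e3 : (n₁ + 1 + ((k₁ - κ : ℕ) : ℤ)) = n₁ + (k₁ : ℤ) - (κ : ℤ) + 1 := by omega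
      rw [e1, e2, e3]
    refine le_trans (le_of_eq heq) ?_
    have hnn := Tsum_nonneg u v n₁ k₁ (k + 1)
    show _ ≤ Tsum u v n₁ k₁ k₀
    linarith
  · -- part (ii)
    intro k hk0 hk1
    rw [← qlb_key huv n₁ k₁ k]
    exact qlb_mono huv n₁ (show k₀ ≤ k by omega) hk1
  · -- part (iii)
    intro hsum
    have htel := qlb_tel huv n₁ (Nat.zero_le k₁) (le_refl k₁)
    have hre_v := reindex_refl 0 k₁ k₁ (Nat.zero_le _) le_rfl
      (fun j => ‖v (k₁ + 1 - j) (n₁ - 1 - (j : ℤ))‖ ^ 2)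
    have hre_u := reindex_refl 0 k₁ k₁ (Nat.zero_le _) le_rfl
      (fun j => ‖u (k₁ + 1 - j) (n₁ + 1 + (j : ℤ))‖ ^ 2)
    simp only [Nat.sub_self, Nat.sub_zero] at hre_v hre_u
    rw [hre_v, hre_u, ← Finset.sum_add_distrib]
    have heq : (∑ κ ∈ Finset.Icc 0 k₁,
        (‖v (k₁ + 1 - (k₁ - κ)) (n₁ - 1 - ((k₁ - κ : ℕ) : ℤ))‖ ^ 2
          + ‖u (k₁ + 1 - (k₁ - κ)) (n₁ + 1 + ((k₁ - κ : ℕ) : ℤ))‖ ^ 2))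
        = ∑ κ ∈ Finset.Icc 0 k₁,
        (‖v (κ + 1) (n₁ - (k₁ : ℤ) + (κ : ℤ) - 1)‖ ^ 2
          + ‖u (κ + 1) (n₁ + (k₁ : ℤ) - (κ : ℤ) + 1)‖ ^ 2) := by
      refine Finset.sum_congr rfl fun κ hκ => ?_
      simp only [Finset.mem_Icc] at hκ
      have e1 : k₁ + 1 - (k₁ - κ) = κ + 1 := by omega
      have e2 : (n₁ - 1 - ((k₁ - κ : ℕ) : ℤ)) = n₁ - (k₁ : ℤ) + (κ : ℤ) - 1 := by omega
      have e3 : (n₁ + 1 + ((k₁ - κ : ℕ) : ℤ)) = n₁ + (k₁ : ℤ) - (κ : ℤ) + 1 := by omega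
      rw [e1, e2, e3]
    refine le_trans (le_of_eq heq) ?_
    have hnn := Tsum_nonneg u v n₁ k₁ (k₁ + 1)
    have h0 : Tsum u v n₁ k₁ 0
        ≤ ∑' l : ℤ, (‖u 0 l‖ ^ 2 + ‖v 0 l‖ ^ 2) :=
      Summable.sum_le_tsum _ (fun i _ => by positivity) hsum
    linarith

end
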